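/- Let α and q be real numbers and n, r natural numbers. Then Σ_{k=0}^{n} (-1)^k binom(α, k+r) C(n,k) (1-q)^{n-k} q^{k} = Σ_{j=0}^{n} (-1)^{j} C(n,j) binom(j+α, j+r) q^j, where binom(t, s) denotes the generalized binomial coefficient of a real number t and natural number s. -/

import Mathlib

open Finset

/-- Generalized binomial coefficient `t(t-1)⋯(t-s+1)/s!` of a real `t`. -/
noncomputable def rchoose (t : ℝ) (s : ℕ) : ℝ :=
  (∏ i ∈ range s, (t - (i : ℝ))) / (s.factorial : ℝ)

lemma rchoose_pascal (t : ℝ) (s : ℕ) :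
    rchoose (t + 1) (s + 1) = rchoose t (s + 1) + rchoose t s := by
  unfold rchoose
  have h1 : ∏ i ∈ range (s + 1), (t + 1 - (i : ℝ)) =
      (∏ i ∈ range s, (t - (i : ℝ))) * (t + 1) := by
    rw [Finset.prod_range_succ']
    congr 1
    · apply Finset.prod_congr rfl
      intro i _
      push_cast
      ring
    · norm_num
  have h2 : ∏ i ∈ range (s + 1), (t - (i : ℝ)) =
      (∏ i ∈ range s, (t - (i : ℝ))) * (t - s) := Finset.prod_range_succ _ _
  rw [h1, h2, Nat.factorial_succ]
  have hs : (s.factorial : ℝ) ≠ 0 := Nat.cast_ne_zero.mpr s.factorial_ne_zero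
  have hs1 : ((s : ℝ) + 1) ≠ 0 := by positivity
  push_cast
  field_simp
  ring

lemma rchoose_vandermonde (α : ℝ) : ∀ (j r : ℕ),
    ∑ k ∈ range (j + 1), (j.choose k : ℝ) * rchoose α (k + r) =
      rchoose ((j : ℝ) + α) (j + r) := by
  intro j
  induction j with
  | zero => intro r; simp
  | succ j ih =>
    intro r
    rw [Finset.sum_range_succ']
    have hsplit : ∀ k ∈ range (j + 1),
        ((j + 1).choose (k + 1) : ℝ) * rchoose α (k + 1 + r) =
          (j.choose k : ℝ) * rchoose α (k + (r + 1)) +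
            (j.choose (k + 1) : ℝ) * rchoose α ((k + 1) + r) := by
      intro k _
      rw [Nat.choose_succ_succ]
      push_cast
      rw [show k + 1 + r = k + (r + 1) by ring]
      ring
    rw [Finset.sum_congr rfl hsplit, Finset.sum_add_distrib]
    have hch : (((j + 1).choose 0 : ℕ) : ℝ) = ((j.choose 0 : ℕ) : ℝ) := by simp
    rw [hch]
    have h2 : ∑ k ∈ range (j + 1), (j.choose (k + 1) : ℝ) * rchoose α ((k + 1) + r) +
        (j.choose 0 : ℝ) * rchoose α (0 + r) =
        ∑ k ∈ range (j + 1), (j.choose k : ℝ) * rchoose α (k + r) := by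
      rw [← Finset.sum_range_succ' (fun k => (j.choose k : ℝ) * rchoose α (k + r)) (j + 1)]
      · rw [Finset.sum_range_succ]
        simp [Nat.choose_succ_self]
    rw [add_assoc, h2, ih (r + 1), ih r]
    have : rchoose ((j : ℝ) + α + 1) (j + r + 1) =
        rchoose ((j : ℝ) + α) (j + r + 1) + rchoose ((j : ℝ) + α) (j + r) :=
      rchoose_pascal _ _
    rw [show j + (r + 1) = j + r + 1 by ring] at *
    rw [← this]
    congr 1
    · push_cast; ring
    · omega

theorem binomial_reversed_bernoulli_transform (α q : ℝ) (n r : ℕ) :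
    ∑ k ∈ range (n + 1),
        (-1 : ℝ) ^ k * rchoose α (k + r) * (n.choose k : ℝ) * (1 - q) ^ (n - k) * q ^ k =
      ∑ j ∈ range (n + 1),
        (-1 : ℝ) ^ j * (n.choose j : ℝ) * rchoose ((j : ℝ) + α) (j + r) * q ^ j := by
  have h1 : ∀ j ∈ range (n + 1),
      (-1 : ℝ) ^ j * (n.choose j : ℝ) * rchoose ((j : ℝ) + α) (j + r) * q ^ j =
        ∑ k ∈ Ico 0 (j + 1),
          (-1 : ℝ) ^ j * (n.choose j : ℝ) * (j.choose k : ℝ) * rchoose α (k + r) * q ^ j := by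
    intro j _
    rw [← rchoose_vandermonde α j r, ← Nat.Ico_zero_eq_range, Finset.mul_sum, Finset.sum_mul]
    apply Finset.sum_congr rfl
    intro k _
    ring
  rw [Finset.sum_congr rfl h1, Finset.range_eq_Ico,
    ← Finset.sum_Ico_Ico_comm 0 (n + 1) (fun k j =>
      (-1 : ℝ) ^ j * (n.choose j : ℝ) * (j.choose k : ℝ) * rchoose α (k + r) * q ^ j),
    ← Finset.range_eq_Ico]
  apply Finset.sum_congr rfl
  intro k hk
  rw [Finset.mem_range] at hk
  have hkn : k ≤ n := Nat.lt_succ_iff.mp hk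
  rw [Finset.sum_Ico_eq_sum_range]
  have hlen : n + 1 - k = (n - k) + 1 := by omega
  rw [hlen]
  have h2 : ∀ m ∈ range ((n - k) + 1),
      (-1 : ℝ) ^ (k + m) * (n.choose (k + m) : ℝ) * ((k + m).choose k : ℝ) *
          rchoose α (k + r) * q ^ (k + m) =
        ((-1 : ℝ) ^ k * rchoose α (k + r) * (n.choose k : ℝ) * q ^ k) *
          ((-q) ^ m * 1 ^ (n - k - m) * ((n - k).choose m : ℝ)) := by
    intro m hm
    rw [Finset.mem_range] at hm
    have hmn : k + m ≤ n := by omega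
    have hcc : (n.choose (k + m) : ℝ) * ((k + m).choose k : ℝ) =
        (n.choose k : ℝ) * ((n - k).choose m : ℝ) := by
      rw [← Nat.cast_mul, Nat.choose_mul (Nat.le_add_right k m),
        Nat.add_sub_cancel_left, Nat.cast_mul]
    calc (-1 : ℝ) ^ (k + m) * (n.choose (k + m) : ℝ) * ((k + m).choose k : ℝ) *
          rchoose α (k + r) * q ^ (k + m)
        = ((n.choose (k + m) : ℝ) * ((k + m).choose k : ℝ)) *
            ((-1 : ℝ) ^ (k + m) * rchoose α (k + r) * q ^ (k + m)) := by ring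
      _ = ((n.choose k : ℝ) * ((n - k).choose m : ℝ)) *
            ((-1 : ℝ) ^ (k + m) * rchoose α (k + r) * q ^ (k + m)) := by rw [hcc]
      _ = _ := by rw [pow_add, pow_add, neg_pow q m]; ring
  rw [Finset.sum_congr rfl h2, ← Finset.mul_sum, ← add_pow (-q) 1 (n - k)]
  have : (-q + 1) = (1 - q) := by ring
  rw [this]
  ring
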